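/- arXiv:2012.07768 — 5 statements merged into one kernel-verified Lean document; each statement's English description precedes it below -/
import Mathlib

section
/- There exists a constant c > 0 (depending only on β and n) such that c|ξ|^β + c|k|^β ≤ ∫₀¹ |ξ + r k|^β dr for all k, ξ ∈ ℝ^n and all β ∈ (0,2]. -/
open MeasureTheory

private lemma aux_cont {n : ℕ} (β : ℝ) (hβ : 0 ≤ β) (ξ k : EuclideanSpace ℝ (Fin n)) :
    Continuous fun r : ℝ => ‖ξ + r • k‖ ^ β :=
  ((continuous_const.add (continuous_id.smul continuous_const)).norm).rpow_const
    (fun _ => Or.inr hβ)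

private lemma aux_key {n : ℕ} (β : ℝ) (hβ0 : 0 < β) (k ξ : EuclideanSpace ℝ (Fin n))
    (hk : k ≠ 0) :
    (1/4) * (‖k‖/4) ^ β ≤ ∫ r in (0:ℝ)..1, ‖ξ + r • k‖ ^ β := by
  have hb : (0:ℝ) < ‖k‖ := norm_pos_iff.mpr hk
  set b := ‖k‖ with hbdef
  set a : ℝ := (inner ℝ ξ k : ℝ) / b with ha
  have hpt : ∀ r : ℝ, |a + r * b| ≤ ‖ξ + r • k‖ := by
    intro r
    have h1 : |(inner ℝ (ξ + r • k) k : ℝ)| ≤ ‖ξ + r • k‖ * b := abs_real_inner_le_norm _ _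
    have h2 : (inner ℝ (ξ + r • k) k : ℝ) = (inner ℝ ξ k : ℝ) + r * b ^ 2 := by
      rw [inner_add_left, real_inner_smul_left, real_inner_self_eq_norm_sq]
    have h3 : a + r * b = ((inner ℝ ξ k : ℝ) + r * b ^ 2) / b := by
      rw [ha, div_add' _ _ _ hb.ne']; ring
    rw [h3, abs_div, abs_of_pos hb, div_le_iff₀ hb, ← h2]
    exact h1
  have hcont := aux_cont (n := n) β hβ0.le ξ k
  have hint : ∀ u v : ℝ, IntervalIntegrable (fun r => ‖ξ + r • k‖ ^ β) volume u v :=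
    fun u v => hcont.intervalIntegrable u v
  have hnn : ∀ u v : ℝ, u ≤ v → 0 ≤ ∫ r in u..v, ‖ξ + r • k‖ ^ β := by
    intro u v huv
    apply intervalIntegral.integral_nonneg huv
    intro x _; positivity
  have hsplit : ∀ u : ℝ, 0 ≤ u → u + 1/4 ≤ 1 →
      (∀ r ∈ Set.Icc u (u + 1/4), b/4 ≤ |a + r * b|) →
      (1/4) * (b/4) ^ β ≤ ∫ r in (0:ℝ)..1, ‖ξ + r • k‖ ^ β := by
    intro u hu hu1 hbound
    have e1 : (∫ r in (0:ℝ)..u, ‖ξ + r • k‖ ^ β) + (∫ r in u..(u+1/4), ‖ξ + r • k‖ ^ β)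
        = ∫ r in (0:ℝ)..(u+1/4), ‖ξ + r • k‖ ^ β :=
      intervalIntegral.integral_add_adjacent_intervals (hint _ _) (hint _ _)
    have e2 : (∫ r in (0:ℝ)..(u+1/4), ‖ξ + r • k‖ ^ β) + (∫ r in (u+1/4)..1, ‖ξ + r • k‖ ^ β)
        = ∫ r in (0:ℝ)..1, ‖ξ + r • k‖ ^ β :=
      intervalIntegral.integral_add_adjacent_intervals (hint _ _) (hint _ _)
    have hmid : (1/4) * (b/4) ^ β ≤ ∫ r in u..(u+1/4), ‖ξ + r • k‖ ^ β := by
      have hconst : (∫ _ in u..(u+1/4), (b/4) ^ β) = (1/4) * (b/4) ^ β := by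
        simp
      rw [← hconst]
      apply intervalIntegral.integral_mono_on (by linarith) (by simp) (hint _ _)
      intro x hx
      have h4 : b/4 ≤ ‖ξ + x • k‖ := le_trans (hbound x hx) (hpt x)
      exact Real.rpow_le_rpow (by positivity) h4 hβ0.le
    have n1 := hnn 0 u hu
    have n2 := hnn (u + 1/4) 1 hu1
    linarith
  rcases le_or_gt 0 (a + b/2) with hcase | hcase
  · apply hsplit (3/4) (by norm_num) (by norm_num)
    intro r hr
    have h5 : b/4 ≤ a + r * b := by nlinarith [hr.1, hb]
    exact le_trans h5 (le_abs_self _)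
  · apply hsplit 0 le_rfl (by norm_num)
    intro r hr
    have h5 : b/4 ≤ -(a + r * b) := by nlinarith [hr.2, hb]
    exact le_trans h5 (neg_le_abs _)

/-- There is c > 0 with c|ξ|^β + c|k|^β ≤ ∫₀¹ |ξ + r k|^β dr. -/
theorem stmt_4 (n : ℕ) (hn : 1 ≤ n) (β : ℝ) (hβ0 : 0 < β) (hβ2 : β ≤ 2) :
    ∃ c > 0, ∀ k ξ : EuclideanSpace ℝ (Fin n),
      c * ‖ξ‖ ^ β + c * ‖k‖ ^ β ≤ ∫ r in (0:ℝ)..1, ‖ξ + r • k‖ ^ β := by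
  refine ⟨1/324, by norm_num, fun k ξ => ?_⟩
  set I := ∫ r in (0:ℝ)..1, ‖ξ + r • k‖ ^ β with hI
  have hcont := aux_cont (n := n) β hβ0.le ξ k
  have hint : IntervalIntegrable (fun r => ‖ξ + r • k‖ ^ β) volume 0 1 :=
    hcont.intervalIntegrable 0 1
  have hInn : 0 ≤ I := by
    apply intervalIntegral.integral_nonneg (by norm_num)
    intro x _; positivity
  -- bound on ‖k‖^β
  have hkI : ‖k‖ ^ β ≤ 64 * I := by
    rcases eq_or_ne k 0 with rfl | hk
    · rw [norm_zero, Real.zero_rpow hβ0.ne']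
      linarith
    · have hkey := aux_key β hβ0 k ξ hk
      have h4 : (4:ℝ) ^ β ≤ 16 := by
        calc (4:ℝ) ^ β ≤ 4 ^ (2:ℝ) :=
              Real.rpow_le_rpow_of_exponent_le (by norm_num) hβ2
          _ = 16 := by
              rw [Real.rpow_two]; norm_num
      have hdiv : (‖k‖/4) ^ β = ‖k‖ ^ β / 4 ^ β :=
        Real.div_rpow (norm_nonneg k) (by norm_num : (0:ℝ) ≤ 4) β
      have h4pos : (0:ℝ) < 4 ^ β := Real.rpow_pos_of_pos (by norm_num) β
      have hknn : 0 ≤ ‖k‖ ^ β := Real.rpow_nonneg (norm_nonneg k) β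
      have : ‖k‖ ^ β / 16 ≤ ‖k‖ ^ β / 4 ^ β := by
        apply div_le_div_of_nonneg_left hknn h4pos h4
      rw [hdiv] at hkey
      linarith
  -- bound on ‖ξ‖^β
  have hxI : ‖ξ‖ ^ β ≤ 4 * I + 4 * ‖k‖ ^ β := by
    have hpt : ∀ r ∈ Set.Icc (0:ℝ) 1,
        ‖ξ‖ ^ β ≤ 4 * ‖ξ + r • k‖ ^ β + 4 * ‖k‖ ^ β := by
      intro r hr
      set x := ‖ξ + r • k‖ with hx
      set y := ‖k‖ with hy
      have hxnn : 0 ≤ x := norm_nonneg _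
      have hynn : 0 ≤ y := norm_nonneg _
      have h1 : ‖ξ‖ ≤ x + y := by
        calc ‖ξ‖ = ‖(ξ + r • k) + (-(r • k))‖ := by rw [add_neg_cancel_right]
          _ ≤ x + ‖-(r • k)‖ := norm_add_le _ _
          _ = x + |r| * y := by rw [norm_neg, norm_smul, Real.norm_eq_abs]
          _ ≤ x + y := by
              have : |r| ≤ 1 := abs_le.mpr ⟨by linarith [hr.1], hr.2⟩
              nlinarith
      have h2 : x + y ≤ 2 * max x y := by
        rcases le_total x y with h | h <;> simp [max_eq_right, max_eq_left, h] <;> linarith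
      have h3 : ‖ξ‖ ^ β ≤ (2 * max x y) ^ β :=
        Real.rpow_le_rpow (norm_nonneg _) (le_trans h1 h2) hβ0.le
      have hmnn : 0 ≤ max x y := le_max_of_le_left hxnn
      have h4 : (2 * max x y) ^ β = 2 ^ β * (max x y) ^ β :=
        Real.mul_rpow (by norm_num) hmnn
      have h5 : (2:ℝ) ^ β ≤ 4 := by
        calc (2:ℝ) ^ β ≤ 2 ^ (2:ℝ) :=
              Real.rpow_le_rpow_of_exponent_le (by norm_num) hβ2
          _ = 4 := by rw [Real.rpow_two]; norm_num
      have h6 : (max x y) ^ β ≤ x ^ β + y ^ β := by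
        rcases le_total x y with h | h
        · rw [max_eq_right h]
          have := Real.rpow_nonneg hxnn β
          linarith
        · rw [max_eq_left h]
          have := Real.rpow_nonneg hynn β
          linarith
      have hmb : 0 ≤ (max x y) ^ β := Real.rpow_nonneg hmnn β
      calc ‖ξ‖ ^ β ≤ 2 ^ β * (max x y) ^ β := by rw [← h4]; exact h3
        _ ≤ 4 * (max x y) ^ β := by nlinarith
        _ ≤ 4 * (x ^ β + y ^ β) := by nlinarith
        _ = 4 * x ^ β + 4 * y ^ β := by ring
    have hconst : (∫ _ in (0:ℝ)..1, ‖ξ‖ ^ β) = ‖ξ‖ ^ β := by simp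
    have hmono : (∫ _ in (0:ℝ)..1, ‖ξ‖ ^ β)
        ≤ ∫ r in (0:ℝ)..1, (4 * ‖ξ + r • k‖ ^ β + 4 * ‖k‖ ^ β) := by
      apply intervalIntegral.integral_mono_on (by norm_num) (by simp)
      · exact (hint.const_mul 4).add (intervalIntegrable_const)
      · exact hpt
    have hval : (∫ r in (0:ℝ)..1, (4 * ‖ξ + r • k‖ ^ β + 4 * ‖k‖ ^ β))
        = 4 * I + 4 * ‖k‖ ^ β := by
      rw [intervalIntegral.integral_add (hint.const_mul 4) intervalIntegrable_const,
        intervalIntegral.integral_const_mul]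
      simp [hI]
    rw [hconst] at hmono
    rw [hval] at hmono
    exact hmono
  linarith
end

section
/- Let β ∈ (0,2], s ≥ 0, γ > 0, and define ρ_t(x) = x^{(β/2)(s+1)} exp(−γ x^{β/2} t) for x ≥ 0 and t ≥ 0. Then for every n ∈ ℕ₀ there is a constant C(n) independent of t such that x^n |ρ_t^{(n)}(x)| ≤ C(n) ρ_t(x/2) for all x > 0, t ≥ 0. -/
open Finset Real

/-- Derivative formula: the n-th derivative of y^a * exp(-γ y^b t) on (0,∞) is a
sum of terms c_k (γ t)^k x^(a-n+bk) exp(-γ x^b t) with coefficients independent of t. -/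
lemma aux_formula (a b γ : ℝ) (n : ℕ) :
    ∃ c : ℕ → ℝ, ∀ t : ℝ, ∀ x : ℝ, 0 < x →
      iteratedDeriv n (fun y : ℝ => y ^ a * Real.exp (-γ * y ^ b * t)) x
        = ∑ k ∈ Finset.range (n+1),
            c k * ((γ*t) ^ k * (x ^ (a - n + b*k) * Real.exp (-γ * x ^ b * t))) := by
  induction n with
  | zero =>
    refine ⟨fun _ => 1, fun t x hx => ?_⟩
    simp [iteratedDeriv_zero]
  | succ n ih =>
    obtain ⟨c, hc⟩ := ih
    set ct : ℕ → ℝ := fun k => if k ≤ n then c k else 0 with hct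
    refine ⟨fun k => (a - n + b*k) * ct k - b * (if k = 0 then 0 else ct (k-1)),
      fun t x hx => ?_⟩
    have hE : ∀ y : ℝ, 0 < y →
        iteratedDeriv n (fun y : ℝ => y ^ a * Real.exp (-γ * y ^ b * t)) y
        = ∑ k ∈ Finset.range (n+1),
            ct k * ((γ*t) ^ k * (y ^ (a - n + b*k) * Real.exp (-γ * y ^ b * t))) := by
      intro y hy
      rw [hc t y hy]
      refine Finset.sum_congr rfl fun k hk => ?_
      rw [Finset.mem_range] at hk
      simp [hct, Nat.lt_succ_iff.mp hk]
    rw [iteratedDeriv_succ]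
    have heq : (iteratedDeriv n (fun y : ℝ => y ^ a * Real.exp (-γ * y ^ b * t)))
        =ᶠ[nhds x] (fun y => ∑ k ∈ Finset.range (n+1),
            ct k * ((γ*t) ^ k * (y ^ (a - n + b*k) * Real.exp (-γ * y ^ b * t)))) := by
      filter_upwards [IsOpen.mem_nhds isOpen_Ioi hx] with y hy using hE y hy
    rw [heq.deriv_eq]
    -- derivative of each term
    have hterm : ∀ k : ℕ, HasDerivAt
        (fun y : ℝ => ct k * ((γ*t) ^ k * (y ^ (a - n + b*k) * Real.exp (-γ * y ^ b * t))))
        (ct k * ((γ*t) ^ k *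
          ((a - n + b*k) * x ^ (a - n + b*k - 1) * Real.exp (-γ * x ^ b * t)
          + x ^ (a - n + b*k) * (Real.exp (-γ * x ^ b * t) * (-γ * (b * x ^ (b-1)) * t))))) x := by
      intro k
      have h1 : HasDerivAt (fun y : ℝ => y ^ (a - n + b*k))
          ((a - n + b*k) * x ^ (a - n + b*k - 1)) x :=
        Real.hasDerivAt_rpow_const (Or.inl hx.ne')
      have h2 : HasDerivAt (fun y : ℝ => -γ * y ^ b * t)
          (-γ * (b * x ^ (b-1)) * t) x := by
        have := Real.hasDerivAt_rpow_const (p := b) (Or.inl hx.ne')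
        exact (this.const_mul (-γ)).mul_const t
      have h3 : HasDerivAt (fun y : ℝ => Real.exp (-γ * y ^ b * t))
          (Real.exp (-γ * x ^ b * t) * (-γ * (b * x ^ (b-1)) * t)) x := h2.exp
      exact ((h1.mul h3).const_mul _).const_mul _
    have hsum := HasDerivAt.fun_sum (u := Finset.range (n+1)) (fun k _ => hterm k)
    rw [hsum.deriv]
    -- now algebra: reindex
    have hsplit : ∑ k ∈ Finset.range (n+1+1),
        ((a - n + b*k) * ct k - b * (if k = 0 then 0 else ct (k-1))) *
          ((γ*t) ^ k * (x ^ (a - ((n+1:ℕ):ℝ) + b*k) * Real.exp (-γ * x ^ b * t)))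
        = (∑ k ∈ Finset.range (n+1),
            (a - n + b*k) * ct k * ((γ*t) ^ k * (x ^ (a - ((n+1:ℕ):ℝ) + b*k) * Real.exp (-γ * x ^ b * t))))
          - ∑ k ∈ Finset.range (n+1),
            b * ct k * ((γ*t) ^ (k+1) * (x ^ (a - ((n+1:ℕ):ℝ) + b*((k+1:ℕ):ℝ)) * Real.exp (-γ * x ^ b * t))) := by
      have expand : ∀ k ∈ Finset.range (n+1+1),
          ((a - n + b*k) * ct k - b * (if k = 0 then 0 else ct (k-1))) *
            ((γ*t) ^ k * (x ^ (a - ((n+1:ℕ):ℝ) + b*k) * Real.exp (-γ * x ^ b * t)))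
          = (a - n + b*k) * ct k * ((γ*t) ^ k * (x ^ (a - ((n+1:ℕ):ℝ) + b*k) * Real.exp (-γ * x ^ b * t)))
            - (if k = 0 then 0 else b * ct (k-1) * ((γ*t) ^ k * (x ^ (a - ((n+1:ℕ):ℝ) + b*k) * Real.exp (-γ * x ^ b * t)))) := by
        intro k _
        by_cases hk : k = 0 <;> simp [hk] <;> ring
      rw [Finset.sum_congr rfl expand, Finset.sum_sub_distrib]
      congr 1
      · -- first sum: top term vanishes
        rw [Finset.sum_range_succ]
        have : ct (n+1) = 0 := by simp [hct]
        simp [this]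
      · -- second sum: reindex
        rw [Finset.sum_range_succ']
        simp
    rw [hsplit, ← Finset.sum_sub_distrib]
    refine Finset.sum_congr rfl fun k _ => ?_
    have e1 : a - ((n+1:ℕ):ℝ) + b*k = a - (n:ℝ) + b*k - 1 := by push_cast; ring
    have e2 : a - ((n+1:ℕ):ℝ) + b*((k+1:ℕ):ℝ) = (a - (n:ℝ) + b*k) + (b-1) := by push_cast; ring
    rw [e1, e2, Real.rpow_add hx (a - (n:ℝ) + b*(k:ℝ)) (b-1)]
    have q1 : x ^ (a - (n:ℝ) + b*(k:ℝ)) = x ^ (a - (n:ℝ) + b*(k:ℝ) - 1) * x := by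
      conv_lhs => rw [show a - (n:ℝ) + b*(k:ℝ) = (a - (n:ℝ) + b*(k:ℝ) - 1) + 1 by ring]
      rw [Real.rpow_add_one hx.ne']
    have q2 : x ^ (b - 1) = x ^ b / x := Real.rpow_sub_one hx.ne' b
    rw [q1, q2]
    field_simp
    ring

/-- Derivative bounds: xⁿ |ρ_t⁽ⁿ⁾(x)| ≲ ρ_t(x/2), uniformly in t ≥ 0. -/
theorem stmt_5 (β s γ : ℝ) (hβ0 : 0 < β) (hβ2 : β ≤ 2) (hs : 0 ≤ s) (hγ : 0 < γ)
    (n : ℕ) :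
    ∃ C > 0, ∀ t : ℝ, 0 ≤ t → ∀ x : ℝ, 0 < x →
      x ^ n * |iteratedDeriv n
          (fun y : ℝ => y ^ ((β/2)*(s+1)) * Real.exp (-γ * y ^ (β/2) * t)) x|
        ≤ C * ((x/2) ^ ((β/2)*(s+1)) * Real.exp (-γ * (x/2) ^ (β/2) * t)) := by
  set a := (β/2)*(s+1) with ha_def
  set b := β/2 with hb_def
  have hb : 0 < b := by rw [hb_def]; linarith
  obtain ⟨c, hc⟩ := aux_formula a b γ n
  set δ : ℝ := 1 - (2:ℝ)^(-b) with hδ_def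
  have h2b : (0:ℝ) < (2:ℝ)^(-b) := Real.rpow_pos_of_pos two_pos _
  have h2blt : (2:ℝ)^(-b) < 1 :=
    Real.rpow_lt_one_of_one_lt_of_neg one_lt_two (by linarith)
  have hδ : 0 < δ := by rw [hδ_def]; linarith
  set M : ℝ := ∑ k ∈ Finset.range (n+1), |c k| * (k.factorial / δ^k) with hM_def
  have hM : 0 ≤ M := Finset.sum_nonneg fun k _ => mul_nonneg (abs_nonneg _) (by positivity)
  have h2a : (0:ℝ) < (2:ℝ)^a := Real.rpow_pos_of_pos two_pos _
  refine ⟨(2:ℝ)^a * M + 1, by positivity, fun t ht x hx => ?_⟩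
  have hu : 0 ≤ γ * t * x ^ b :=
    mul_nonneg (mul_nonneg hγ.le ht) (Real.rpow_pos_of_pos hx b).le
  have hEeq : Real.exp (-(γ*t*x^b)) = Real.exp (-γ*x^b*t) := by ring_nf
  -- kernel bound: uᵏ e^{-u} ≤ (k!/δᵏ) e^{-u/2^b}
  have hker : ∀ k : ℕ, (γ*t*x^b)^k * Real.exp (-γ*x^b*t)
      ≤ ((k.factorial : ℝ) / δ^k) * Real.exp (-γ * (x/2)^b * t) := by
    intro k
    set u := γ*t*x^b with hu_def
    have h1 : (δ*u)^k / (k.factorial : ℝ) ≤ Real.exp (δ*u) :=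
      Real.pow_div_factorial_le_exp (x := δ*u) (by positivity) k
    have h2 : u^k ≤ ((k.factorial : ℝ) / δ^k) * Real.exp (δ*u) := by
      have h3 := mul_le_mul_of_nonneg_right h1
        (show (0:ℝ) ≤ (k.factorial : ℝ)/δ^k by positivity)
      have h4 : (δ*u)^k / (k.factorial : ℝ) * ((k.factorial : ℝ)/δ^k) = u^k := by
        rw [mul_pow]; field_simp
      rw [h4] at h3
      linarith [h3, mul_comm (Real.exp (δ*u)) ((k.factorial : ℝ)/δ^k)]
    have hxd : (x/2:ℝ)^b = x^b * (2:ℝ)^(-b) := by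
      rw [Real.div_rpow hx.le (by norm_num), Real.rpow_neg (by norm_num), div_eq_mul_inv]
    have hexp : Real.exp (-γ*x^b*t) = Real.exp (-(δ*u)) * Real.exp (-γ * (x/2)^b * t) := by
      rw [← Real.exp_add]; congr 1
      rw [hxd, hδ_def, hu_def]; ring
    have h5 : u^k * Real.exp (-(δ*u)) ≤ (k.factorial : ℝ)/δ^k := by
      calc u^k * Real.exp (-(δ*u))
          ≤ ((k.factorial : ℝ)/δ^k * Real.exp (δ*u)) * Real.exp (-(δ*u)) :=
            mul_le_mul_of_nonneg_right h2 (Real.exp_pos _).le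
        _ = (k.factorial : ℝ)/δ^k := by rw [mul_assoc, ← Real.exp_add]; simp
    calc u^k * Real.exp (-γ*x^b*t)
        = (u^k * Real.exp (-(δ*u))) * Real.exp (-γ * (x/2)^b * t) := by rw [hexp]; ring
      _ ≤ ((k.factorial : ℝ)/δ^k) * Real.exp (-γ * (x/2)^b * t) :=
          mul_le_mul_of_nonneg_right h5 (Real.exp_pos _).le
  rw [hc t x hx]
  have habs : ∀ k ∈ Finset.range (n+1),
      x ^ n * |c k * ((γ*t)^k * (x^(a-(n:ℝ)+b*(k:ℝ)) * Real.exp (-γ*x^b*t)))|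
      ≤ |c k| * ((k.factorial : ℝ)/δ^k) * (x^a * Real.exp (-γ * (x/2)^b * t)) := by
    intro k _
    have hterm_eq : (x:ℝ) ^ (n:ℕ) * ((γ*t)^k * (x^(a-(n:ℝ)+b*(k:ℝ)) * Real.exp (-γ*x^b*t)))
        = ((γ*t*x^b)^k * Real.exp (-γ*x^b*t)) * x^a := by
      have split : x ^ (a-(n:ℝ)+b*(k:ℝ)) * x ^ (n:ℕ) = x ^ a * (x^b)^k := by
        rw [← Real.rpow_natCast x n, ← Real.rpow_natCast (x^b) k, ← Real.rpow_mul hx.le,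
          ← Real.rpow_add hx, ← Real.rpow_add hx]
        congr 1; ring
      calc (x:ℝ) ^ (n:ℕ) * ((γ*t)^k * (x^(a-(n:ℝ)+b*(k:ℝ)) * Real.exp (-γ*x^b*t)))
          = (γ*t)^k * (x ^ (a-(n:ℝ)+b*(k:ℝ)) * x ^ (n:ℕ)) * Real.exp (-γ*x^b*t) := by ring
        _ = (γ*t)^k * (x ^ a * (x^b)^k) * Real.exp (-γ*x^b*t) := by rw [split]
        _ = ((γ*t*x^b)^k * Real.exp (-γ*x^b*t)) * x^a := by rw [mul_pow]; ring
    have hnn : 0 ≤ (γ*t)^k * (x^(a-(n:ℝ)+b*(k:ℝ)) * Real.exp (-γ*x^b*t)) :=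
      mul_nonneg (pow_nonneg (mul_nonneg hγ.le ht) k)
        (mul_nonneg (Real.rpow_pos_of_pos hx _).le (Real.exp_pos _).le)
    rw [abs_mul, abs_of_nonneg hnn]
    calc x ^ n * (|c k| * ((γ*t)^k * (x^(a-(n:ℝ)+b*(k:ℝ)) * Real.exp (-γ*x^b*t))))
        = |c k| * (x ^ n * ((γ*t)^k * (x^(a-(n:ℝ)+b*(k:ℝ)) * Real.exp (-γ*x^b*t)))) := by ring
      _ = |c k| * (((γ*t*x^b)^k * Real.exp (-γ*x^b*t)) * x^a) := by rw [hterm_eq]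
      _ ≤ |c k| * ((((k.factorial : ℝ)/δ^k) * Real.exp (-γ * (x/2)^b * t)) * x^a) := by
          have := mul_le_mul_of_nonneg_right (hker k) (Real.rpow_pos_of_pos hx a).le
          exact mul_le_mul_of_nonneg_left this (abs_nonneg _)
      _ = |c k| * ((k.factorial : ℝ)/δ^k) * (x^a * Real.exp (-γ * (x/2)^b * t)) := by ring
  have hx2 : ((x/2:ℝ))^a = x^a / (2:ℝ)^a := Real.div_rpow hx.le (by norm_num) a
  calc x ^ n * |∑ k ∈ Finset.range (n+1),
        c k * ((γ*t)^k * (x^(a-(n:ℝ)+b*(k:ℝ)) * Real.exp (-γ*x^b*t)))|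
      ≤ x ^ n * ∑ k ∈ Finset.range (n+1),
        |c k * ((γ*t)^k * (x^(a-(n:ℝ)+b*(k:ℝ)) * Real.exp (-γ*x^b*t)))| :=
        mul_le_mul_of_nonneg_left (Finset.abs_sum_le_sum_abs _ _) (by positivity)
    _ = ∑ k ∈ Finset.range (n+1),
        x ^ n * |c k * ((γ*t)^k * (x^(a-(n:ℝ)+b*(k:ℝ)) * Real.exp (-γ*x^b*t)))| :=
        Finset.mul_sum _ _ _
    _ ≤ ∑ k ∈ Finset.range (n+1),
        |c k| * ((k.factorial : ℝ)/δ^k) * (x^a * Real.exp (-γ * (x/2)^b * t)) :=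
        Finset.sum_le_sum habs
    _ = M * (x^a * Real.exp (-γ * (x/2)^b * t)) := by
        rw [hM_def, ← Finset.sum_mul]
    _ ≤ ((2:ℝ)^a * M + 1) * ((x/2)^a * Real.exp (-γ * (x/2)^b * t)) := by
        have hxa : (0:ℝ) < x^a := Real.rpow_pos_of_pos hx a
        have key : M * x^a ≤ ((2:ℝ)^a * M + 1) * ((x/2:ℝ))^a := by
          rw [hx2]
          have : ((2:ℝ)^a * M + 1) * (x^a / (2:ℝ)^a) = M * x^a + x^a/(2:ℝ)^a := by
            field_simp
          rw [this]
          have : 0 < x^a/(2:ℝ)^a := by positivity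
          linarith
        calc M * (x^a * Real.exp (-γ * (x/2)^b * t))
            = (M * x^a) * Real.exp (-γ * (x/2)^b * t) := by ring
          _ ≤ (((2:ℝ)^a * M + 1) * ((x/2:ℝ))^a) * Real.exp (-γ * (x/2)^b * t) :=
              mul_le_mul_of_nonneg_right key (Real.exp_pos _).le
          _ = ((2:ℝ)^a * M + 1) * ((x/2)^a * Real.exp (-γ * (x/2)^b * t)) := by ring
end

section
/- If u ∈ C₀(ℝ^{2n}) (continuous, vanishing at infinity) and T ∈ (0,∞), then the function (t,x,v) ↦ u(x+tv, v) is uniformly continuous on [0,T] × ℝ^n × ℝ^n. -/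
/-- If u ∈ C₀(ℝ^{2n}) then Γu is uniformly continuous on [0,T] × ℝ^{2n}. -/
theorem stmt_8 (n : ℕ) (hn : 1 ≤ n) (u : (Fin n → ℝ) × (Fin n → ℝ) → ℝ)
    (hc : Continuous u)
    (h0 : Filter.Tendsto u (Filter.cocompact ((Fin n → ℝ) × (Fin n → ℝ))) (nhds 0))
    (T : ℝ) (hT : 0 < T) :
    UniformContinuousOn
      (fun p : ℝ × ((Fin n → ℝ) × (Fin n → ℝ)) => u (p.2.1 + p.1 • p.2.2, p.2.2))
      (Set.Icc 0 T ×ˢ Set.univ) := by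
  rw [Metric.uniformContinuousOn_iff]
  intro ε hε
  -- uniform continuity of u
  have hu : UniformContinuous u := hc.uniformContinuous_of_tendsto_cocompact h0
  obtain ⟨δ', hδ', hδ'u⟩ := Metric.uniformContinuous_iff.mp hu (ε / 2) (by linarith)
  -- u small outside a large ball
  have hsmall : ∀ᶠ z in Filter.cocompact ((Fin n → ℝ) × (Fin n → ℝ)),
      dist (u z) 0 < ε / 2 := h0 (Metric.ball_mem_nhds 0 (by linarith))
  rw [Filter.eventually_iff, Filter.mem_cocompact] at hsmall
  obtain ⟨K, hKc, hKs⟩ := hsmall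
  obtain ⟨R, hR0, hKR⟩ : ∃ R : ℝ, 0 ≤ R ∧ K ⊆ Metric.closedBall 0 R := by
    obtain ⟨R, hKR⟩ := hKc.isBounded.subset_closedBall 0
    exact ⟨max R 0, le_max_right _ _,
      hKR.trans (Metric.closedBall_subset_closedBall (le_max_left _ _))⟩
  have husmall : ∀ z : (Fin n → ℝ) × (Fin n → ℝ), R < ‖z.2‖ → |u z| < ε / 2 := by
    intro z hz
    have : z ∉ K := fun hzK => absurd (mem_closedBall_zero_iff.mp (hKR hzK))
      (not_le.mpr (lt_of_lt_of_le hz (le_max_right _ _)))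
    simpa [Real.dist_eq] using hKs this
  set δ : ℝ := min 1 (min δ' (δ' / (2 + R + T))) with hδdef
  have hδpos : 0 < δ := by
    refine lt_min one_pos (lt_min hδ' (div_pos hδ' (by linarith)))
  refine ⟨δ, hδpos, ?_⟩
  rintro ⟨t, x, v⟩ ⟨⟨ht0, htT⟩, -⟩ ⟨s, y, w⟩ ⟨⟨hs0, hsT⟩, -⟩ hd
  have hdt : dist t s < δ := by
    simpa [Prod.dist_eq] using lt_of_le_of_lt (le_max_left _ _) hd
  have hdxv : dist (x, v) (y, w) < δ := by
    simpa [Prod.dist_eq] using lt_of_le_of_lt (le_max_right _ _) hd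
  have hdx : dist x y < δ := lt_of_le_of_lt (by simpa [Prod.dist_eq] using le_max_left (dist x y) (dist v w)) hdxv
  have hdv : dist v w < δ := lt_of_le_of_lt (by simpa [Prod.dist_eq] using le_max_right (dist x y) (dist v w)) hdxv
  have hδ1 : δ ≤ 1 := min_le_left _ _
  have hδδ' : δ ≤ δ' := le_trans (min_le_right _ _) (min_le_left _ _)
  have hδq : δ ≤ δ' / (2 + R + T) := le_trans (min_le_right _ _) (min_le_right _ _)
  by_cases hv : R + 1 ≤ ‖v‖
  · -- far case: both values are small
    have hw : R < ‖w‖ := by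
      have := norm_sub_norm_le v w
      rw [← dist_eq_norm] at this
      nlinarith
    have h1 : |u (x + t • v, v)| < ε / 2 := husmall _ (by simpa using by nlinarith)
    have h2 : |u (y + s • w, w)| < ε / 2 := husmall _ (by simpa using hw)
    calc dist (u (x + t • v, v)) (u (y + s • w, w))
        ≤ |u (x + t • v, v)| + |u (y + s • w, w)| := by
          rw [Real.dist_eq]; exact (abs_sub _ _)
      _ < ε := by linarith
  · -- near case: the arguments are within δ'
    push_neg at hv
    refine lt_trans (hδ'u ?_) (by linarith)
    rw [Prod.dist_eq]
    have hst : |s| ≤ T := by rw [abs_of_nonneg hs0]; exact hsT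
    have key : dist (x + t • v) (y + s • w) < δ' := by
      have : x + t • v - (y + s • w) = (x - y) + ((t - s) • v + s • (v - w)) := by
        module
      rw [dist_eq_norm, this]
      have h1 : ‖(x - y) + ((t - s) • v + s • (v - w))‖
          ≤ ‖x - y‖ + (|t - s| * ‖v‖ + |s| * ‖v - w‖) := by
        refine (norm_add_le _ _).trans ?_
        gcongr
        refine (norm_add_le _ _).trans ?_
        simp [norm_smul]
      have hxy : ‖x - y‖ < δ := by rwa [← dist_eq_norm]
      have hts : |t - s| < δ := by rwa [← Real.dist_eq]
      have hvw : ‖v - w‖ < δ := by rwa [← dist_eq_norm]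
      have h2 : ‖x - y‖ + (|t - s| * ‖v‖ + |s| * ‖v - w‖) < δ * (2 + R + T) := by
        have hnv : 0 ≤ ‖v‖ := norm_nonneg _
        have hnvw : 0 ≤ ‖v - w‖ := norm_nonneg _
        nlinarith [abs_nonneg (t - s)]
      have h3 : δ * (2 + R + T) ≤ δ' := by
        rw [← le_div_iff₀ (by linarith)] at *
        exact hδq
      linarith
    rw [max_lt_iff]
    exact ⟨key, lt_of_lt_of_le hdv hδδ'⟩
end

section
/- Let n = 1 and a(t,x,v) = max(min(|x|,1), 1/2). Then a is bounded and uniformly continuous on [0,T] × ℝ², but the function (t,x,v) ↦ a(t, x+tv, v) is not uniformly continuous on [0,T] × ℝ² for any T > 0. -/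
/-- a(t,x,v) = max(min(|x|,1),1/2) is bounded and uniformly continuous on
    [0,T] × ℝ², but Γa is not uniformly continuous there, for any T > 0. -/
theorem stmt_9 (T : ℝ) (hT : 0 < T) :
    (∃ M : ℝ, ∀ p : ℝ × ℝ × ℝ, |max (min |p.2.1| 1) (1/2)| ≤ M) ∧
    UniformContinuousOn (fun p : ℝ × ℝ × ℝ => max (min |p.2.1| 1) (1/2))
      (Set.Icc 0 T ×ˢ Set.univ) ∧
    ¬ UniformContinuousOn
        (fun p : ℝ × ℝ × ℝ => max (min |p.2.1 + p.1 * p.2.2| 1) (1/2))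
        (Set.Icc 0 T ×ˢ Set.univ) := by
  refine ⟨⟨1, fun p => ?_⟩, ?_, ?_⟩
  · rw [abs_of_nonneg (le_trans (by norm_num) (le_max_right _ _))]
    exact max_le (min_le_right _ _) (by norm_num)
  · rw [Metric.uniformContinuousOn_iff]
    intro ε hε
    refine ⟨ε, hε, fun p _ q _ hpq => ?_⟩
    have key : dist (max (min |p.2.1| 1) (1/2)) (max (min |q.2.1| 1) (1/2))
        ≤ dist p.2.1 q.2.1 := by
      rw [Real.dist_eq, Real.dist_eq]
      calc |max (min |p.2.1| 1) (1/2) - max (min |q.2.1| 1) (1/2)|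
          ≤ |min |p.2.1| 1 - min |q.2.1| 1| := abs_max_sub_max_le_abs _ _ _
        _ ≤ max (abs (|p.2.1| - |q.2.1|)) |1 - 1| := abs_min_sub_min_le_max _ _ _ _
        _ = abs (|p.2.1| - |q.2.1|) := by simp
        _ ≤ |p.2.1 - q.2.1| := abs_abs_sub_abs_le_abs_sub _ _
    have h2 : dist p.2.1 q.2.1 ≤ dist p q := by
      rw [Prod.dist_eq, Prod.dist_eq]
      exact (le_max_left _ _).trans (le_max_right _ _)
    exact lt_of_le_of_lt (key.trans h2) hpq
  · rw [Metric.uniformContinuousOn_iff]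
    push_neg
    refine ⟨1/4, by norm_num, fun δ hδ => ?_⟩
    set t : ℝ := min δ T / 2 with ht
    have ht0 : 0 < t := by positivity
    have htT : t ≤ T := by
      have := min_le_right δ T; rw [ht]; linarith
    refine ⟨(0, 0, 1/t), ⟨⟨le_refl 0, hT.le⟩, trivial⟩, (t, 0, 1/t), ⟨⟨le_of_lt ht0, htT⟩, trivial⟩, ?_, ?_⟩
    · have hd : dist ((0:ℝ), (0:ℝ), 1/t) (t, 0, 1/t) = t := by
        simp [Prod.dist_eq, Real.dist_eq, abs_of_pos ht0, ht0.le]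
      rw [hd]
      have := min_le_left δ T
      rw [ht]; linarith
    · have h1 : t * (1/t) = 1 := mul_one_div_cancel ht0.ne'
      simp only [Real.dist_eq, zero_add, zero_mul, add_zero, h1]
      norm_num [abs_of_nonneg]
end

section
/- Let X be a Banach space, p ∈ (1,∞), μ ∈ (1/p,1], T ∈ (0,∞]. Every u ∈ W^{1,p}_μ((0,T);X) (i.e. u, u' ∈ L^p_μ((0,T);X)) has a continuous representative on [0,T], and the embedding W^{1,p}_μ((0,T);X) ↪ C([0,T];X) is continuous; in particular the trace u(0) is well defined. -/
open MeasureTheory ENNReal Set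
open scoped Interval

private lemma stmt_11_aux_measurable_rpow_const (c : ℝ) : Measurable fun r : ℝ => r ^ c := by
  measurability

set_option maxHeartbeats 1000000

/-- W^{1,p}_μ((0,T);X) embeds continuously into C([0,T];X);
    in particular the trace at t = 0 is well defined. -/
theorem stmt_11 {X : Type*} [NormedAddCommGroup X] [NormedSpace ℝ X]
    [CompleteSpace X]
    (p μ : ℝ) (hp : 1 < p) (hμ1 : 1/p < μ) (hμ2 : μ ≤ 1)
    (T : ℝ≥0∞) (hT : 0 < T) :
    ∃ C > 0, ∀ u v : ℝ → X,
      (∀ t ∈ {t : ℝ | 0 < t ∧ ENNReal.ofReal t < T}, HasDerivAt u (v t) t) →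
      (∫⁻ t in {t : ℝ | 0 < t ∧ ENNReal.ofReal t < T},
          ENNReal.ofReal (t ^ (p - μ*p) * ‖u t‖ ^ p)) < ⊤ →
      (∫⁻ t in {t : ℝ | 0 < t ∧ ENNReal.ofReal t < T},
          ENNReal.ofReal (t ^ (p - μ*p) * ‖v t‖ ^ p)) < ⊤ →
      ∃ w : ℝ → X,
        ContinuousOn w {t : ℝ | 0 ≤ t ∧ ENNReal.ofReal t ≤ T} ∧
        (∀ t ∈ {t : ℝ | 0 < t ∧ ENNReal.ofReal t < T}, w t = u t) ∧
        ∀ t ∈ {t : ℝ | 0 ≤ t ∧ ENNReal.ofReal t ≤ T},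
          ENNReal.ofReal (‖w t‖ ^ p) ≤ ENNReal.ofReal C *
            ((∫⁻ r in {r : ℝ | 0 < r ∧ ENNReal.ofReal r < T},
                ENNReal.ofReal (r ^ (p - μ*p) * ‖u r‖ ^ p))
              + ∫⁻ r in {r : ℝ | 0 < r ∧ ENNReal.ofReal r < T},
                  ENNReal.ofReal (r ^ (p - μ*p) * ‖v r‖ ^ p)) := by
  classical
  have hp0 : (0:ℝ) < p := lt_trans one_pos hp
  have hp0' : p ≠ 0 := ne_of_gt hp0
  have hpq := Real.HolderConjugate.conjExponent hp
  set q : ℝ := p.conjExponent with hq_def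
  have hq0 : 0 < q := hpq.symm.pos
  have hμp : 1 < μ * p := by rw [div_lt_iff₀ hp0] at hμ1; linarith
  have he : 0 ≤ p - μ * p := by nlinarith
  have hα : -1 < (μ - 1) * q := by
    have hq : q = p / (p - 1) := hpq.conjugate_eq
    have hp1 : (0:ℝ) < p - 1 := by linarith
    have h2 : (1 - μ) * q < 1 := by
      rw [hq, ← mul_div_assoc, div_lt_one hp1]; nlinarith
    nlinarith
  have hα0 : (μ - 1) * q ≤ 0 := mul_nonpos_of_nonpos_of_nonneg (by linarith) hq0.le
  set S : Set ℝ := {t : ℝ | 0 < t ∧ ENNReal.ofReal t < T} with hSdef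
  have hSmeas : MeasurableSet S :=
    (measurableSet_Ioi (a := (0:ℝ))).inter (ENNReal.measurable_ofReal measurableSet_Iio)
  set β : ℝ := T.toReal with hβdef
  have hβpos : T ≠ ⊤ → 0 < β := fun h => ENNReal.toReal_pos hT.ne' h
  set b : ℝ := if T = ⊤ then 1 else min 1 β with hbdef
  have hb0 : 0 < b := by
    rw [hbdef]; split_ifs with h
    · norm_num
    · exact lt_min one_pos (hβpos h)
  have hb1 : b ≤ 1 := by
    rw [hbdef]; split_ifs with h
    · exact le_rfl
    · exact min_le_left _ _
  have hbβ : T ≠ ⊤ → b ≤ β := by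
    intro h; rw [hbdef, if_neg h]; exact min_le_right _ _
  have hmemS : ∀ r : ℝ, 0 < r → r < b → r ∈ S := by
    intro r hr0 hrb
    refine ⟨hr0, ?_⟩
    by_cases h : T = ⊤
    · simp [h]
    · have hβ0 := hβpos h
      have : r < β := lt_of_lt_of_le hrb (hbβ h)
      calc ENNReal.ofReal r < ENNReal.ofReal β := (ENNReal.ofReal_lt_ofReal_iff hβ0).mpr this
        _ = T := ENNReal.ofReal_toReal h
  have hmemS' : ∀ t r : ℝ, ENNReal.ofReal t ≤ T → 0 ≤ t → 0 < r →
      r ≤ max (b/2) (t - b/4) → r ∈ S := by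
    intro t r htT ht0 hr0 hrle
    refine ⟨hr0, ?_⟩
    by_cases h : T = ⊤
    · simp [h]
    · have hβ0 := hβpos h
      have htβ : t ≤ β := by
        by_contra hc; push_neg at hc
        have h1 : ENNReal.ofReal β < ENNReal.ofReal t :=
          (ENNReal.ofReal_lt_ofReal_iff (lt_trans hβ0 hc)).mpr hc
        rw [hβdef, ENNReal.ofReal_toReal h] at h1
        exact absurd htT (not_le.mpr h1)
      have hbβ' : b ≤ β := hbβ h
      have hrβ : r < β := by
        rcases max_cases (b/2) (t - b/4) with ⟨hm, _⟩ | ⟨hm, _⟩ <;> rw [hm] at hrle <;> linarith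
      calc ENNReal.ofReal r < ENNReal.ofReal β := (ENNReal.ofReal_lt_ofReal_iff hβ0).mpr hrβ
        _ = T := ENNReal.ofReal_toReal h
  -- finiteness of the singular weight integral near 0
  have hK1 : (∫⁻ r in Ioc 0 (b/2), ENNReal.ofReal (r ^ ((μ-1)*q))) < ⊤ := by
    have h1 : IntervalIntegrable (fun x : ℝ => x ^ ((μ-1)*q)) volume 0 (b/2) :=
      intervalIntegral.intervalIntegrable_rpow' hα
    rw [intervalIntegrable_iff, uIoc_of_le (by linarith : (0:ℝ) ≤ b/2)] at h1
    exact h1.lintegral_lt_top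
  set K : ℝ≥0∞ := (∫⁻ r in Ioc 0 (b/2), ENNReal.ofReal (r ^ ((μ-1)*q)))
      + ENNReal.ofReal ((b/2) ^ ((μ-1)*q)) * ENNReal.ofReal (b/2) with hKdef
  have hKtop : K ≠ ⊤ := by
    rw [hKdef]
    exact (ENNReal.add_lt_top.mpr ⟨hK1, ENNReal.mul_lt_top ENNReal.ofReal_lt_top ENNReal.ofReal_lt_top⟩).ne
  set D : ℝ≥0∞ := (2:ℝ≥0∞) ^ p *
      (ENNReal.ofReal ((b/4) ^ (-(p - μ*p))) * (ENNReal.ofReal (b/4))⁻¹ + K ^ (p/q)) with hDdef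
  have hb4 : (0:ℝ) < b/4 := by linarith
  have hb4ne : ENNReal.ofReal (b/4) ≠ 0 := by
    simp only [ne_eq, ENNReal.ofReal_eq_zero, not_le]; exact hb4
  have hDtop : D ≠ ⊤ := by
    rw [hDdef]
    apply ENNReal.mul_ne_top
    · exact ENNReal.rpow_ne_top_of_nonneg hp0.le (by norm_num)
    · apply ENNReal.add_ne_top.mpr
      constructor
      · exact ENNReal.mul_ne_top ENNReal.ofReal_ne_top (ENNReal.inv_ne_top.mpr hb4ne)
      · exact ENNReal.rpow_ne_top_of_nonneg (div_nonneg hp0.le hq0.le) hKtop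
  refine ⟨D.toReal + 1, by positivity, ?_⟩
  intro u v hderiv hufin hvfin
  set ΦU : ℝ≥0∞ := ∫⁻ r in S, ENNReal.ofReal (r ^ (p - μ*p) * ‖u r‖ ^ p) with hΦU
  set ΦV : ℝ≥0∞ := ∫⁻ r in S, ENNReal.ofReal (r ^ (p - μ*p) * ‖v r‖ ^ p) with hΦV
  set v' : ℝ → X := fun r => if r ∈ S then v r else 0 with hv'def
  have hv'S : ∀ r ∈ S, v' r = v r := fun r hr => if_pos hr
  have hv'0 : ∀ r, r ∉ S → v' r = 0 := fun r hr => if_neg hr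
  have hv'sm : StronglyMeasurable v' := by
    have h : v' = S.indicator (deriv u) := by
      funext r
      by_cases hr : r ∈ S
      · rw [indicator_of_mem hr, hv'S r hr, (hderiv r hr).deriv]
      · rw [hv'0 r hr, indicator_of_notMem hr]
    rw [h]
    exact (stronglyMeasurable_deriv u).indicator hSmeas
  -- Hölder estimate
  have holder : ∀ W : Set ℝ, MeasurableSet W → W ⊆ Ioi 0 →
      (∫⁻ r in W, ENNReal.ofReal ‖v' r‖) ≤
        ΦV ^ (1/p) * (∫⁻ r in W, ENNReal.ofReal (r ^ ((μ-1)*q))) ^ (1/q) := by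
    intro W hWm hW0
    set f : ℝ → ℝ≥0∞ := fun r => ENNReal.ofReal (r ^ (1-μ) * ‖v' r‖) with hfdef
    set g : ℝ → ℝ≥0∞ := fun r => ENNReal.ofReal (r ^ (μ-1)) with hgdef
    have hfm : AEMeasurable f (volume.restrict W) := by
      apply Measurable.aemeasurable
      exact ((stmt_11_aux_measurable_rpow_const (1-μ)).mul
        hv'sm.norm.measurable).ennreal_ofReal
    have hgm : AEMeasurable g (volume.restrict W) := by
      apply Measurable.aemeasurable
      exact (stmt_11_aux_measurable_rpow_const (μ-1)).ennreal_ofReal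
    have e1 : (∫⁻ r in W, ENNReal.ofReal ‖v' r‖) = ∫⁻ r in W, (f * g) r := by
      refine setLIntegral_congr_fun_ae hWm (ae_of_all _ fun r hr => ?_)
      have hr0 : 0 < r := hW0 hr
      simp only [Pi.mul_apply, hfdef, hgdef]
      rw [← ENNReal.ofReal_mul (mul_nonneg (Real.rpow_nonneg hr0.le _) (norm_nonneg _))]
      congr 1
      have harr : r ^ (1-μ) * ‖v' r‖ * r ^ (μ-1) = (r ^ (1-μ) * r ^ (μ-1)) * ‖v' r‖ := by ring
      rw [harr, ← Real.rpow_add hr0, show (1-μ) + (μ-1) = 0 by ring, Real.rpow_zero, one_mul]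
    have e2 := ENNReal.lintegral_mul_le_Lp_mul_Lq (volume.restrict W) hpq hfm hgm
    have e3 : (∫⁻ r in W, f r ^ p) ≤ ΦV := by
      have h1 : ∀ᵐ r ∂(volume : Measure ℝ), r ∈ W →
          f r ^ p = ENNReal.ofReal (r ^ (p - μ*p) * ‖v' r‖ ^ p) := by
        refine ae_of_all _ fun r hr => ?_
        have hr0 : 0 < r := hW0 hr
        simp only [hfdef]
        rw [ENNReal.ofReal_rpow_of_nonneg
          (mul_nonneg (Real.rpow_nonneg hr0.le _) (norm_nonneg _)) hp0.le]
        congr 1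
        rw [Real.mul_rpow (Real.rpow_nonneg hr0.le _) (norm_nonneg _),
          ← Real.rpow_mul hr0.le, show (1-μ)*p = p - μ*p by ring]
      rw [setLIntegral_congr_fun_ae hWm h1]
      have h2 : ∀ r, ENNReal.ofReal (r ^ (p - μ*p) * ‖v' r‖ ^ p) ≤
          S.indicator (fun r => ENNReal.ofReal (r ^ (p - μ*p) * ‖v r‖ ^ p)) r := by
        intro r
        by_cases hr : r ∈ S
        · rw [indicator_of_mem hr, hv'S r hr]
        · rw [indicator_of_notMem hr, hv'0 r hr, norm_zero, Real.zero_rpow hp0',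
            mul_zero, ENNReal.ofReal_zero]
      calc (∫⁻ r in W, ENNReal.ofReal (r ^ (p - μ*p) * ‖v' r‖ ^ p))
          ≤ ∫⁻ r in W, S.indicator (fun r => ENNReal.ofReal (r ^ (p - μ*p) * ‖v r‖ ^ p)) r :=
            lintegral_mono h2
        _ ≤ ∫⁻ r, S.indicator (fun r => ENNReal.ofReal (r ^ (p - μ*p) * ‖v r‖ ^ p)) r :=
            setLIntegral_le_lintegral _ _
        _ = ΦV := lintegral_indicator hSmeas _
    have e4 : (∫⁻ r in W, g r ^ q) = ∫⁻ r in W, ENNReal.ofReal (r ^ ((μ-1)*q)) := by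
      refine setLIntegral_congr_fun_ae hWm (ae_of_all _ fun r hr => ?_)
      have hr0 : 0 < r := hW0 hr
      simp only [hgdef]
      rw [ENNReal.ofReal_rpow_of_nonneg (Real.rpow_nonneg hr0.le _) hq0.le,
        ← Real.rpow_mul hr0.le]
    calc (∫⁻ r in W, ENNReal.ofReal ‖v' r‖) = ∫⁻ r in W, (f * g) r := e1
      _ ≤ (∫⁻ r in W, f r ^ p) ^ (1/p) * (∫⁻ r in W, g r ^ q) ^ (1/q) := e2
      _ ≤ ΦV ^ (1/p) * (∫⁻ r in W, ENNReal.ofReal (r ^ ((μ-1)*q))) ^ (1/q) := by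
          rw [e4]
          exact mul_le_mul'
            (ENNReal.rpow_le_rpow e3 (one_div_nonneg.mpr hp0.le)) le_rfl
  -- integrability of v'
  have hIic : (∫⁻ r in Iic (0:ℝ), ENNReal.ofReal ‖v' r‖) = 0 := by
    have : ∀ᵐ r ∂(volume : Measure ℝ), r ∈ Iic (0:ℝ) →
        ENNReal.ofReal ‖v' r‖ = 0 := by
      refine ae_of_all _ fun r hr => ?_
      rw [hv'0 r (fun hc => absurd hc.1 (not_lt.mpr hr)), norm_zero, ENNReal.ofReal_zero]
    rw [setLIntegral_congr_fun_ae measurableSet_Iic this, lintegral_zero]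
  have hIoc : ∀ M : ℝ, (∫⁻ r in Ioc 0 M, ENNReal.ofReal ‖v' r‖) < ⊤ := by
    intro M
    rcases le_or_gt M 0 with h | h
    · rw [Ioc_eq_empty (not_lt.mpr h)]; simp
    · refine lt_of_le_of_lt (holder _ measurableSet_Ioc Ioc_subset_Ioi_self) ?_
      refine ENNReal.mul_lt_top
        (ENNReal.rpow_lt_top_of_nonneg (one_div_nonneg.mpr hp0.le) hvfin.ne) ?_
      refine ENNReal.rpow_lt_top_of_nonneg (one_div_nonneg.mpr hq0.le) ?_
      have h1 : IntervalIntegrable (fun x : ℝ => x ^ ((μ-1)*q)) volume 0 M :=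
        intervalIntegral.intervalIntegrable_rpow' hα
      rw [intervalIntegrable_iff, uIoc_of_le h.le] at h1
      exact h1.lintegral_lt_top.ne
  have hvint : ∀ a₁ b₁ : ℝ, IntervalIntegrable v' volume a₁ b₁ := by
    intro a₁ b₁
    rw [intervalIntegrable_iff]
    refine ⟨hv'sm.aestronglyMeasurable.restrict, ?_⟩
    rw [hasFiniteIntegral_iff_norm]
    have hsub : Ι a₁ b₁ ⊆ Iic 0 ∪ Ioc 0 (max a₁ b₁) := by
      intro r hr
      rcases le_or_gt r 0 with h | h
      · exact Or.inl h
      · exact Or.inr ⟨h, hr.2⟩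
    calc (∫⁻ r in Ι a₁ b₁, ENNReal.ofReal ‖v' r‖)
        ≤ ∫⁻ r in Iic 0 ∪ Ioc 0 (max a₁ b₁), ENNReal.ofReal ‖v' r‖ :=
          lintegral_mono_set hsub
      _ ≤ (∫⁻ r in Iic (0:ℝ), ENNReal.ofReal ‖v' r‖)
            + ∫⁻ r in Ioc 0 (max a₁ b₁), ENNReal.ofReal ‖v' r‖ :=
          lintegral_union_le _ _ _
      _ < ⊤ := by rw [hIic, zero_add]; exact hIoc _
  -- the continuous representative
  set c : ℝ := b/2 with hcdef
  have hcS : c ∈ S := hmemS c (by linarith) (by rw [hcdef]; linarith)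
  set w : ℝ → X := fun x => u c + ∫ r in c..x, v' r with hwdef
  have hw_cont : Continuous w :=
    continuous_const.add (intervalIntegral.continuous_primitive hvint c)
  have hw_eq : ∀ x ∈ S, w x = u x := by
    intro x hx
    have hsub : uIcc c x ⊆ S := by
      intro r hr
      obtain ⟨h1, h2⟩ := hr
      refine ⟨lt_of_lt_of_le (lt_min hcS.1 hx.1) h1, ?_⟩
      have hmax : max c x ∈ S := by
        rcases max_cases c x with ⟨hm, _⟩ | ⟨hm, _⟩ <;> rw [hm] <;> assumption
      exact lt_of_le_of_lt (ENNReal.ofReal_le_ofReal h2) hmax.2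
    have hftc := intervalIntegral.integral_eq_sub_of_hasDerivAt (f := u) (f' := v')
      (fun r hr => by rw [hv'S r (hsub hr)]; exact hderiv r (hsub hr)) (hvint c x)
    rw [hwdef]; simp only; rw [hftc]; abel
  have hw_sub : ∀ s t : ℝ, w t - w s = ∫ r in s..t, v' r := by
    intro s t
    have h := intervalIntegral.integral_add_adjacent_intervals (hvint c s) (hvint s t)
    rw [hwdef]; simp only; rw [← h]; abel
  refine ⟨w, hw_cont.continuousOn, hw_eq, ?_⟩
  -- the uniform bound
  intro t ht
  obtain ⟨ht0, htT⟩ := ht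
  set a : ℝ := max (b/4) (t - b/2) with hadef
  have ha4 : b/4 ≤ a := le_max_left _ _
  have haS : Icc a (a + b/4) ⊆ S := by
    intro r hr
    have hr0 : 0 < r := lt_of_lt_of_le hb4 (le_trans ha4 hr.1)
    refine hmemS' t r htT ht0 hr0 ?_
    have hub : a + b/4 ≤ max (b/2) (t - b/4) := by
      rcases max_cases (b/4) (t - b/2) with ⟨hm, _⟩ | ⟨hm, _⟩ <;> rw [hadef, hm]
      · exact le_trans (by linarith) (le_max_left _ _)
      · exact le_trans (by linarith) (le_max_right _ _)
    exact le_trans hr.2 hub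
  have hucont : ContinuousOn (fun r => ‖u r‖) (Icc a (a + b/4)) := by
    refine ContinuousOn.norm (fun x hx => ?_)
    exact ((hderiv x (haS hx)).continuousAt).continuousWithinAt
  obtain ⟨s₀, hs₀mem, hs₀min⟩ :=
    isCompact_Icc.exists_isMinOn (nonempty_Icc.mpr (by linarith)) hucont
  have hs₀S : s₀ ∈ S := haS hs₀mem
  have hs₀pos : 0 < s₀ := hs₀S.1
  -- mean value bound for ‖u s₀‖
  have hB : ENNReal.ofReal (‖u s₀‖ ^ p) * ENNReal.ofReal (b/4)
      ≤ ENNReal.ofReal ((b/4) ^ (-(p - μ*p))) * ΦU := by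
    have hvol : volume (Icc a (a + b/4)) = ENNReal.ofReal (b/4) := by
      rw [Real.volume_Icc]; congr 1; ring
    calc ENNReal.ofReal (‖u s₀‖ ^ p) * ENNReal.ofReal (b/4)
        = ∫⁻ _ in Icc a (a + b/4), ENNReal.ofReal (‖u s₀‖ ^ p) := by
          rw [setLIntegral_const, hvol]
      _ ≤ ∫⁻ r in Icc a (a + b/4),
            ENNReal.ofReal ((b/4) ^ (-(p - μ*p))) *
              ENNReal.ofReal (r ^ (p - μ*p) * ‖u r‖ ^ p) := by
          rw [← lintegral_indicator measurableSet_Icc, ← lintegral_indicator measurableSet_Icc]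
          refine lintegral_mono fun r => ?_
          by_cases hr : r ∈ Icc a (a + b/4)
          · rw [indicator_of_mem hr, indicator_of_mem hr,
              ← ENNReal.ofReal_mul (Real.rpow_nonneg hb4.le _)]
            apply ENNReal.ofReal_le_ofReal
            have hrb : b/4 ≤ r := le_trans ha4 hr.1
            have hr0 : 0 < r := lt_of_lt_of_le hb4 hrb
            have h1 : ‖u s₀‖ ≤ ‖u r‖ := hs₀min hr
            have h2 : ‖u s₀‖ ^ p ≤ ‖u r‖ ^ p :=
              Real.rpow_le_rpow (norm_nonneg _) h1 hp0.le
            have h3 : (b/4 : ℝ) ^ (p - μ*p) ≤ r ^ (p - μ*p) :=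
              Real.rpow_le_rpow hb4.le hrb he
            have h4 : (0:ℝ) < (b/4) ^ (p - μ*p) := Real.rpow_pos_of_pos hb4 _
            rw [Real.rpow_neg hb4.le]
            have h6 : ‖u r‖ ^ p ≤ ((b/4) ^ (p - μ*p))⁻¹ * (r ^ (p - μ*p) * ‖u r‖ ^ p) := by
              rw [inv_mul_eq_div, le_div_iff₀ h4]
              calc ‖u r‖ ^ p * (b/4) ^ (p - μ*p)
                  ≤ ‖u r‖ ^ p * r ^ (p - μ*p) :=
                    mul_le_mul_of_nonneg_left h3 (Real.rpow_nonneg (norm_nonneg _) _)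
                _ = r ^ (p - μ*p) * ‖u r‖ ^ p := mul_comm _ _
            linarith
          · rw [indicator_of_notMem hr, indicator_of_notMem hr]
      _ = ENNReal.ofReal ((b/4) ^ (-(p - μ*p))) *
            ∫⁻ r in Icc a (a + b/4), ENNReal.ofReal (r ^ (p - μ*p) * ‖u r‖ ^ p) :=
          lintegral_const_mul' _ _ ENNReal.ofReal_ne_top
      _ ≤ ENNReal.ofReal ((b/4) ^ (-(p - μ*p))) * ΦU :=
          mul_le_mul' le_rfl (lintegral_mono_set haS)
  -- window estimate for the derivative term
  have hIsub : Ι s₀ t ⊆ Ioi 0 := by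
    intro r hr
    exact lt_of_le_of_lt (le_min hs₀pos.le ht0) hr.1
  have hIα : (∫⁻ r in Ι s₀ t, ENNReal.ofReal (r ^ ((μ-1)*q))) ≤ K := by
    have hsub2 : Ι s₀ t ⊆ Ioc 0 (b/2) ∪ (Ι s₀ t ∩ Ioi (b/2)) := by
      intro r hr
      rcases le_or_gt r (b/2) with h | h
      · exact Or.inl ⟨hIsub hr, h⟩
      · exact Or.inr ⟨hr, h⟩
    have htail : (∫⁻ r in Ι s₀ t ∩ Ioi (b/2), ENNReal.ofReal (r ^ ((μ-1)*q)))
        ≤ ENNReal.ofReal ((b/2) ^ ((μ-1)*q)) * ENNReal.ofReal (b/2) := by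
      have hmeas2 : MeasurableSet (Ι s₀ t ∩ Ioi (b/2)) :=
        measurableSet_uIoc.inter measurableSet_Ioi
      have hd : max s₀ t - min s₀ t ≤ b/2 := by
        have hd1 : t - s₀ ≤ b/2 := by
          have h1 : a ≤ s₀ := hs₀mem.1
          have h2 : t - b/2 ≤ a := by rw [hadef]; exact le_max_right _ _
          linarith
        have hd2 : s₀ - t ≤ b/2 := by
          have h1 : s₀ ≤ a + b/4 := hs₀mem.2
          rcases max_cases (b/4) (t - b/2) with ⟨hm, _⟩ | ⟨hm, _⟩ <;>
            rw [hadef, hm] at h1 <;> linarith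
        rcases le_total s₀ t with h | h
        · rw [max_eq_right h, min_eq_left h]; linarith
        · rw [max_eq_left h, min_eq_right h]; linarith
      calc (∫⁻ r in Ι s₀ t ∩ Ioi (b/2), ENNReal.ofReal (r ^ ((μ-1)*q)))
          ≤ ∫⁻ _ in Ι s₀ t ∩ Ioi (b/2), ENNReal.ofReal ((b/2) ^ ((μ-1)*q)) := by
            rw [← lintegral_indicator hmeas2, ← lintegral_indicator hmeas2]
            refine lintegral_mono fun r => ?_
            by_cases hr : r ∈ Ι s₀ t ∩ Ioi (b/2)
            · rw [indicator_of_mem hr, indicator_of_mem hr]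
              exact ENNReal.ofReal_le_ofReal
                (Real.rpow_le_rpow_of_nonpos (by linarith) hr.2.le hα0)
            · rw [indicator_of_notMem hr, indicator_of_notMem hr]
          _ = ENNReal.ofReal ((b/2) ^ ((μ-1)*q)) * volume (Ι s₀ t ∩ Ioi (b/2)) :=
            setLIntegral_const _ _
          _ ≤ ENNReal.ofReal ((b/2) ^ ((μ-1)*q)) * ENNReal.ofReal (b/2) := by
            refine mul_le_mul' le_rfl ?_
            calc volume (Ι s₀ t ∩ Ioi (b/2)) ≤ volume (Ι s₀ t) :=
                measure_mono inter_subset_left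
              _ = ENNReal.ofReal (max s₀ t - min s₀ t) := by
                  rw [uIoc, Real.volume_Ioc]
              _ ≤ ENNReal.ofReal (b/2) := ENNReal.ofReal_le_ofReal hd
    calc (∫⁻ r in Ι s₀ t, ENNReal.ofReal (r ^ ((μ-1)*q)))
        ≤ ∫⁻ r in Ioc 0 (b/2) ∪ (Ι s₀ t ∩ Ioi (b/2)), ENNReal.ofReal (r ^ ((μ-1)*q)) :=
          lintegral_mono_set hsub2
      _ ≤ (∫⁻ r in Ioc 0 (b/2), ENNReal.ofReal (r ^ ((μ-1)*q)))
            + ∫⁻ r in Ι s₀ t ∩ Ioi (b/2), ENNReal.ofReal (r ^ ((μ-1)*q)) :=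
          lintegral_union_le _ _ _
      _ ≤ K := by rw [hKdef]; exact add_le_add le_rfl htail
  set E : ℝ≥0∞ := ΦV ^ (1/p) * K ^ (1/q) with hEdef
  have hEtop : E ≠ ⊤ := by
    rw [hEdef]
    exact (ENNReal.mul_lt_top
      (ENNReal.rpow_lt_top_of_nonneg (one_div_nonneg.mpr hp0.le) hvfin.ne)
      (ENNReal.rpow_lt_top_of_nonneg (one_div_nonneg.mpr hq0.le) hKtop)).ne
  have hwin : (∫⁻ r in Ι s₀ t, ENNReal.ofReal ‖v' r‖) ≤ E :=
    le_trans (holder _ measurableSet_uIoc hIsub)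
      (mul_le_mul' le_rfl (ENNReal.rpow_le_rpow hIα (one_div_nonneg.mpr hq0.le)))
  have hnorm : ‖w t‖ ≤ ‖u s₀‖ + E.toReal := by
    have h1 : w t = u s₀ + (w t - w s₀) := by rw [hw_eq s₀ hs₀S]; abel
    calc ‖w t‖ = ‖u s₀ + (w t - w s₀)‖ := by rw [← h1]
      _ ≤ ‖u s₀‖ + ‖w t - w s₀‖ := norm_add_le _ _
      _ ≤ ‖u s₀‖ + E.toReal := by
          refine add_le_add le_rfl ?_
          rw [hw_sub s₀ t, intervalIntegral.norm_intervalIntegral_eq]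
          refine le_trans (norm_integral_le_lintegral_norm _) ?_
          exact ENNReal.toReal_mono hEtop hwin
  -- assemble
  have hofR : ENNReal.ofReal ‖w t‖ ≤ ENNReal.ofReal ‖u s₀‖ + E := by
    calc ENNReal.ofReal ‖w t‖ ≤ ENNReal.ofReal (‖u s₀‖ + E.toReal) :=
        ENNReal.ofReal_le_ofReal hnorm
      _ = ENNReal.ofReal ‖u s₀‖ + ENNReal.ofReal E.toReal :=
        ENNReal.ofReal_add (norm_nonneg _) ENNReal.toReal_nonneg
      _ = ENNReal.ofReal ‖u s₀‖ + E := by rw [ENNReal.ofReal_toReal hEtop]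
  have h2p : ∀ x y : ℝ≥0∞, (x + y) ^ p ≤ 2 ^ p * (x ^ p + y ^ p) := by
    intro x y
    have hxy : x + y ≤ 2 * max x y := by
      rcases le_total x y with h | h
      · rw [max_eq_right h, two_mul]; exact add_le_add h le_rfl
      · rw [max_eq_left h, two_mul]; exact add_le_add le_rfl h
    calc (x + y) ^ p ≤ (2 * max x y) ^ p := ENNReal.rpow_le_rpow hxy hp0.le
      _ = 2 ^ p * (max x y) ^ p := ENNReal.mul_rpow_of_nonneg _ _ hp0.le
      _ ≤ 2 ^ p * (x ^ p + y ^ p) := by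
          refine mul_le_mul' le_rfl ?_
          rcases le_total x y with h | h
          · rw [max_eq_right h]; exact le_add_self
          · rw [max_eq_left h]; exact le_self_add
  have hBB : ENNReal.ofReal (‖u s₀‖ ^ p) ≤
      ENNReal.ofReal ((b/4) ^ (-(p - μ*p))) * (ENNReal.ofReal (b/4))⁻¹ * ΦU := by
    calc ENNReal.ofReal (‖u s₀‖ ^ p)
        = ENNReal.ofReal (‖u s₀‖ ^ p) * ENNReal.ofReal (b/4) * (ENNReal.ofReal (b/4))⁻¹ := by
          rw [mul_assoc, ENNReal.mul_inv_cancel hb4ne ENNReal.ofReal_ne_top, mul_one]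
      _ ≤ ENNReal.ofReal ((b/4) ^ (-(p - μ*p))) * ΦU * (ENNReal.ofReal (b/4))⁻¹ :=
          mul_le_mul' hB le_rfl
      _ = ENNReal.ofReal ((b/4) ^ (-(p - μ*p))) * (ENNReal.ofReal (b/4))⁻¹ * ΦU := by ring
  have hEp : E ^ p = ΦV * K ^ (p/q) := by
    rw [hEdef, ENNReal.mul_rpow_of_nonneg _ _ hp0.le, ← ENNReal.rpow_mul, ← ENNReal.rpow_mul,
      one_div_mul_cancel hp0', ENNReal.rpow_one, one_div, inv_mul_eq_div]
  have hfinal : ENNReal.ofReal (‖w t‖ ^ p) ≤ D * (ΦU + ΦV) := by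
    calc ENNReal.ofReal (‖w t‖ ^ p) = (ENNReal.ofReal ‖w t‖) ^ p :=
        (ENNReal.ofReal_rpow_of_nonneg (norm_nonneg _) hp0.le).symm
      _ ≤ (ENNReal.ofReal ‖u s₀‖ + E) ^ p := ENNReal.rpow_le_rpow hofR hp0.le
      _ ≤ 2 ^ p * ((ENNReal.ofReal ‖u s₀‖) ^ p + E ^ p) := h2p _ _
      _ = 2 ^ p * (ENNReal.ofReal (‖u s₀‖ ^ p) + ΦV * K ^ (p/q)) := by
          rw [hEp, ENNReal.ofReal_rpow_of_nonneg (norm_nonneg _) hp0.le]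
      _ ≤ 2 ^ p * ((ENNReal.ofReal ((b/4) ^ (-(p - μ*p))) * (ENNReal.ofReal (b/4))⁻¹ * ΦU)
            + K ^ (p/q) * ΦV) := by
          refine mul_le_mul' le_rfl (add_le_add hBB (le_of_eq (mul_comm _ _)))
      _ ≤ 2 ^ p * ((ENNReal.ofReal ((b/4) ^ (-(p - μ*p))) * (ENNReal.ofReal (b/4))⁻¹
            + K ^ (p/q)) * (ΦU + ΦV)) := by
          refine mul_le_mul' le_rfl ?_
          calc ENNReal.ofReal ((b/4) ^ (-(p - μ*p))) * (ENNReal.ofReal (b/4))⁻¹ * ΦU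
                + K ^ (p/q) * ΦV
              ≤ ENNReal.ofReal ((b/4) ^ (-(p - μ*p))) * (ENNReal.ofReal (b/4))⁻¹ * (ΦU + ΦV)
                + K ^ (p/q) * (ΦU + ΦV) :=
                add_le_add (mul_le_mul' le_rfl le_self_add) (mul_le_mul' le_rfl le_add_self)
            _ = (ENNReal.ofReal ((b/4) ^ (-(p - μ*p))) * (ENNReal.ofReal (b/4))⁻¹
                + K ^ (p/q)) * (ΦU + ΦV) := (add_mul _ _ _).symm
      _ = D * (ΦU + ΦV) := by rw [hDdef, mul_assoc]
  refine le_trans hfinal (mul_le_mul' ?_ le_rfl)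
  calc D = ENNReal.ofReal D.toReal := (ENNReal.ofReal_toReal hDtop).symm
    _ ≤ ENNReal.ofReal (D.toReal + 1) := ENNReal.ofReal_le_ofReal (by linarith)
end
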